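/- Let N > 0, α ∈ (0,1), κ ∈ [0,1), T_I > 0 and q > 0 be real numbers, and suppose −N·(1−κ)·ln(1−α) > 1/T_I. Then there exists a real number I with 0 < I < N/(1+q) such that (N − (1+q)·I)·(1 − (1−α)^I)·(1−κ) = I / T_I; that is, the globally homogeneous GRR has a nontrivial fixed point (I, q·I) with positive infected population. -/

import Mathlib

theorem stmt_1 (N α κ T_I q : ℝ) (hN : 0 < N) (hα : α ∈ Set.Ioo (0:ℝ) 1)
    (hκ : κ ∈ Set.Ico (0:ℝ) 1) (hT : 0 < T_I) (hq : 0 < q)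
    (hcond : -N * (1 - κ) * Real.log (1 - α) > 1 / T_I) :
    ∃ I : ℝ, 0 < I ∧ I < N / (1 + q) ∧
      (N - (1 + q) * I) * (1 - (1 - α) ^ I) * (1 - κ) = I / T_I := by
  obtain ⟨hα0, hα1⟩ := hα
  obtain ⟨hκ0, hκ1⟩ := hκ
  have h1α : (0:ℝ) < 1 - α := by linarith
  set L := Real.log (1 - α) with hLdef
  have hL : L < 0 := Real.log_neg h1α (by linarith)
  set f : ℝ → ℝ := fun I => (N - (1 + q) * I) * (1 - Real.exp (L * I)) * (1 - κ) - I / T_I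
    with hf
  have hf0 : f 0 = 0 := by simp [hf]
  set d : ℝ := -N * L * (1 - κ) - 1 / T_I with hd
  have hd0 : 0 < d := by
    have e : -N * L * (1 - κ) = -N * (1 - κ) * L := by ring
    rw [hd, e]; linarith
  -- derivative of f at 0
  have hderiv : HasDerivAt f d 0 := by
    have h1 : HasDerivAt (fun I : ℝ => Real.exp (L * I)) (Real.exp (L * 0) * (L * 1)) 0 :=
      ((hasDerivAt_id (0:ℝ)).const_mul L).exp
    have h2 := (hasDerivAt_const (0:ℝ) (1:ℝ)).sub h1
    have h3 := (hasDerivAt_const (0:ℝ) N).sub ((hasDerivAt_id (0:ℝ)).const_mul (1 + q))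
    have h4 := (h3.mul h2).mul_const (1 - κ)
    have h5 := (hasDerivAt_id (0:ℝ)).div_const T_I
    have h6 := h4.sub h5
    refine h6.congr_deriv ?_
    rw [hd]
    simp only [Pi.sub_apply, mul_zero, mul_one, Real.exp_zero, id_eq]
    ring
  -- f is positive at some small ε > 0
  set M : ℝ := N / (1 + q) with hM
  have hM0 : 0 < M := div_pos hN (by linarith)
  have hslope := hasDerivAt_iff_tendsto_slope.mp hderiv
  have hev : ∀ᶠ x in nhdsWithin 0 {(0:ℝ)}ᶜ, 0 < slope f 0 x :=
    hslope.eventually (eventually_gt_nhds hd0)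
  have hev2 : ∀ᶠ x in nhdsWithin 0 (Set.Ioi 0), 0 < slope f 0 x :=
    hev.filter_mono (nhdsWithin_mono 0 (fun x hx => by
      simp only [Set.mem_compl_iff, Set.mem_singleton_iff]
      exact ne_of_gt hx))
  have hev3 : ∀ᶠ x in nhdsWithin 0 (Set.Ioi 0), x < M :=
    Filter.eventually_iff_exists_mem.mpr ⟨Set.Iio M,
      nhdsWithin_le_nhds (Iio_mem_nhds hM0), fun x hx => hx⟩
  obtain ⟨ε, hslopeε, hεM, hε0⟩ := (hev2.and (hev3.and self_mem_nhdsWithin)).exists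
  have hε0' : 0 < ε := hε0
  have hfε : 0 < f ε := by
    have : slope f 0 ε = f ε / ε := by
      simp [slope, hf0, div_eq_inv_mul]
    rw [this] at hslopeε
    have := mul_pos hslopeε hε0'
    rwa [div_mul_cancel₀ _ (ne_of_gt hε0')] at this
  -- f is negative at M
  have hfM : f M < 0 := by
    have hNM : N - (1 + q) * M = 0 := by
      rw [hM]
      field_simp [show (1 + q) ≠ 0 by linarith]
      ring
    simp only [hf, hNM, zero_mul, zero_sub, neg_lt, neg_zero]
    exact div_pos hM0 hT
  -- IVT
  have hcont : ContinuousOn f (Set.Icc ε M) := by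
    apply Continuous.continuousOn
    fun_prop
  have h0mem : (0:ℝ) ∈ Set.Icc (f M) (f ε) := ⟨le_of_lt hfM, le_of_lt hfε⟩
  obtain ⟨c, hcmem, hfc⟩ := intermediate_value_Icc' (le_of_lt hεM) hcont h0mem
  refine ⟨c, lt_of_lt_of_le hε0' hcmem.1, lt_of_le_of_ne hcmem.2 ?_, ?_⟩
  · intro h
    rw [h] at hfc
    exact absurd hfc (ne_of_lt hfM)
  · have hrpow : (1 - α) ^ c = Real.exp (L * c) := by
      rw [Real.rpow_def_of_pos h1α]
    rw [hrpow]
    have : (N - (1 + q) * c) * (1 - Real.exp (L * c)) * (1 - κ) - c / T_I = 0 := hfc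
    linarith
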